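/- In the Eisenberg–Noe setting (α_x = α_L = 1) under the regularity assumption (p̄_i > 0 and Σ_{j=1}^n π_{ij} < 1 for every i ≤ n), let X : Ω → ℝⁿ₊ be an integrable random endowment vector. Then for every bank i ≤ n (Jensen upper bounds): 𝔼[V_i(X)] ≤ V_i(𝔼[X]) and 𝔼[p_i(X)] ≤ p_i(𝔼[X]). -/

import Mathlib

open Matrix BigOperators MeasureTheory

noncomputable section

/-- Total liabilities `p̄_i = Σ_{j=1}^{n+1} L_{ij}`. -/
def pbar {n : ℕ} (L : Matrix (Fin n) (Fin (n + 1)) ℝ) (i : Fin n) : ℝ :=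
  ∑ j, L i j

/-- Relative liabilities `π_{ij} = L_{ij} / p̄_i` if `p̄_i > 0`, else `0`. -/
def relLiab {n : ℕ} (L : Matrix (Fin n) (Fin (n + 1)) ℝ) (i j : Fin n) : ℝ :=
  if 0 < pbar L i then L i j.castSucc / pbar L i else 0

/-- `p` is the greatest clearing payment vector for endowments `x` in the Eisenberg–Noe
setting: the greatest fixed point of `p ↦ p̄ ∧ (x + Πᵀ p)` on `[0, p̄]`. -/
def IsGreatestClearingPayment {n : ℕ} (L : Matrix (Fin n) (Fin (n + 1)) ℝ)
    (x p : Fin n → ℝ) : Prop :=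
  IsGreatest {q : Fin n → ℝ | (∀ i, 0 ≤ q i ∧ q i ≤ pbar L i) ∧
    ∀ i, q i = min (pbar L i) (x i + ∑ j, relLiab L j i * q j)} p

lemma relLiab_nonneg' {n : ℕ} (L : Matrix (Fin n) (Fin (n + 1)) ℝ)
    (hL : ∀ i j, 0 ≤ L i j) (i j : Fin n) : 0 ≤ relLiab L i j := by
  unfold relLiab
  split
  · exact div_nonneg (hL i j.castSucc) (le_of_lt ‹_›)
  · exact le_rfl

/-- Knaster–Tarski style lemma: any post-fixed point of the clearing map lies below the
greatest clearing payment vector. -/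
lemma postfixed_le_greatest {n : ℕ} (L : Matrix (Fin n) (Fin (n + 1)) ℝ)
    (hL : ∀ i j, 0 ≤ L i j) (hreg : ∀ i, 0 < pbar L i)
    (x p q : Fin n → ℝ) (hp : IsGreatestClearingPayment L x p)
    (hx : ∀ i, 0 ≤ x i)
    (hq0 : ∀ i, 0 ≤ q i) (hqub : ∀ i, q i ≤ pbar L i)
    (hq : ∀ i, q i ≤ min (pbar L i) (x i + ∑ j, relLiab L j i * q j)) :
    ∀ i, q i ≤ p i := by
  set S : Set (Fin n → ℝ) := {r | (∀ i, 0 ≤ r i ∧ r i ≤ pbar L i) ∧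
    ∀ i, r i ≤ min (pbar L i) (x i + ∑ j, relLiab L j i * r j)} with hS
  have hqS : q ∈ S := ⟨fun i => ⟨hq0 i, hqub i⟩, hq⟩
  have hbdd : ∀ i, BddAbove ((fun r => r i) '' S) := by
    intro i
    refine ⟨pbar L i, ?_⟩
    rintro _ ⟨r, hr, rfl⟩
    exact (hr.1 i).2
  set s : Fin n → ℝ := fun i => sSup ((fun r => r i) '' S) with hsdef
  have hne : ∀ i, ((fun r => r i) '' S).Nonempty := fun i => ⟨q i, ⟨q, hqS, rfl⟩⟩
  have hle_s : ∀ r ∈ S, ∀ i, r i ≤ s i := fun r hr i =>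
    le_csSup (hbdd i) ⟨r, hr, rfl⟩
  have hs_ub : ∀ i, s i ≤ pbar L i := by
    intro i
    refine csSup_le (hne i) ?_
    rintro _ ⟨r, hr, rfl⟩
    exact (hr.1 i).2
  have hs0 : ∀ i, 0 ≤ s i := fun i => (hq0 i).trans (hle_s q hqS i)
  have hs_post : ∀ i, s i ≤ min (pbar L i) (x i + ∑ j, relLiab L j i * s j) := by
    intro i
    refine csSup_le (hne i) ?_
    rintro _ ⟨r, hr, rfl⟩
    refine (hr.2 i).trans (min_le_min le_rfl (add_le_add_right ?_ _))
    exact Finset.sum_le_sum fun j _ =>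
      mul_le_mul_of_nonneg_left (hle_s r hr j) (relLiab_nonneg' L hL j i)
  set t : Fin n → ℝ := fun i => min (pbar L i) (x i + ∑ j, relLiab L j i * s j) with htdef
  have htS : t ∈ S := by
    refine ⟨fun i => ⟨?_, min_le_left _ _⟩, fun i => ?_⟩
    · exact le_min (hreg i).le (add_nonneg (hx i) (Finset.sum_nonneg fun j _ =>
        mul_nonneg (relLiab_nonneg' L hL j i) (hs0 j)))
    · exact min_le_min le_rfl (add_le_add_right (Finset.sum_le_sum fun j _ =>
        mul_le_mul_of_nonneg_left (hs_post j) (relLiab_nonneg' L hL j i)) _)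
  have hts : ∀ i, t i ≤ s i := hle_s t htS
  have hfix : ∀ i, s i = min (pbar L i) (x i + ∑ j, relLiab L j i * s j) :=
    fun i => le_antisymm (hs_post i) (hts i)
  have hsmem : s ∈ {r : Fin n → ℝ | (∀ i, 0 ≤ r i ∧ r i ≤ pbar L i) ∧
      ∀ i, r i = min (pbar L i) (x i + ∑ j, relLiab L j i * r j)} :=
    ⟨fun i => ⟨hs0 i, hs_ub i⟩, hfix⟩
  intro i
  exact (hle_s q hqS i).trans (hp.2 hsmem i)

/-- ℓ¹-Lipschitz estimate for the greatest clearing payment. -/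
lemma clearing_lipschitz {n : ℕ} (L : Matrix (Fin n) (Fin (n + 1)) ℝ)
    (hL : ∀ i j, 0 ≤ L i j) (c : ℝ) (hc : ∀ j, ∑ i, relLiab L j i ≤ c)
    (x y px py : Fin n → ℝ)
    (hpx : (∀ i, 0 ≤ px i ∧ px i ≤ pbar L i) ∧
      ∀ i, px i = min (pbar L i) (x i + ∑ j, relLiab L j i * px j))
    (hpy : (∀ i, 0 ≤ py i ∧ py i ≤ pbar L i) ∧
      ∀ i, py i = min (pbar L i) (y i + ∑ j, relLiab L j i * py j)) :
    (1 - c) * ∑ i, |px i - py i| ≤ ∑ i, |x i - y i| := by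
  have key : ∀ i, |px i - py i| ≤ |x i - y i| + ∑ j, relLiab L j i * |px j - py j| := by
    intro i
    rw [hpx.2 i, hpy.2 i]
    have h1 : |min (pbar L i) (x i + ∑ j, relLiab L j i * px j)
        - min (pbar L i) (y i + ∑ j, relLiab L j i * py j)|
        ≤ |(x i + ∑ j, relLiab L j i * px j) - (y i + ∑ j, relLiab L j i * py j)| := by
      refine (abs_min_sub_min_le_max _ _ _ _).trans ?_
      simp
    refine h1.trans ?_
    have h2 : (x i + ∑ j, relLiab L j i * px j) - (y i + ∑ j, relLiab L j i * py j)
        = (x i - y i) + ∑ j, relLiab L j i * (px j - py j) := by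
      have : ∑ j, relLiab L j i * (px j - py j)
          = (∑ j, relLiab L j i * px j) - ∑ j, relLiab L j i * py j := by
        rw [← Finset.sum_sub_distrib]
        exact Finset.sum_congr rfl fun j _ => by ring
      rw [this]; ring
    rw [h2]
    refine (abs_add_le _ _).trans (add_le_add_right ?_ _)
    refine (Finset.abs_sum_le_sum_abs _ _).trans ?_
    refine Finset.sum_le_sum fun j _ => ?_
    rw [abs_mul, abs_of_nonneg (relLiab_nonneg' L hL j i)]
  have hsum : ∑ i, |px i - py i| ≤ (∑ i, |x i - y i|) + c * ∑ j, |px j - py j| := by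
    calc ∑ i, |px i - py i|
        ≤ ∑ i, (|x i - y i| + ∑ j, relLiab L j i * |px j - py j|) :=
          Finset.sum_le_sum fun i _ => key i
      _ = (∑ i, |x i - y i|) + ∑ i, ∑ j, relLiab L j i * |px j - py j| := by
          rw [Finset.sum_add_distrib]
      _ = (∑ i, |x i - y i|) + ∑ j, (∑ i, relLiab L j i) * |px j - py j| := by
          rw [Finset.sum_comm]
          congr 1
          exact Finset.sum_congr rfl fun j _ => by rw [Finset.sum_mul]
      _ ≤ (∑ i, |x i - y i|) + ∑ j, c * |px j - py j| := by
          refine add_le_add_right (Finset.sum_le_sum fun j _ =>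
            mul_le_mul_of_nonneg_right (hc j) (abs_nonneg _)) _
      _ = (∑ i, |x i - y i|) + c * ∑ j, |px j - py j| := by rw [Finset.mul_sum]
  nlinarith [hsum]

/-- In the Eisenberg–Noe setting under the regularity assumption, for an integrable random
endowment vector `X`, the Jensen upper bounds hold for every bank `i`:
`𝔼[V_i(X)] ≤ V_i(𝔼[X])` and `𝔼[p_i(X)] ≤ p_i(𝔼[X])`. -/
theorem jensen_upper_bound (n : ℕ) (hn : 1 ≤ n)
    (L : Matrix (Fin n) (Fin (n + 1)) ℝ)
    (hL : ∀ i j, 0 ≤ L i j) (hLdiag : ∀ i : Fin n, L i i.castSucc = 0)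
    (hreg : ∀ i, 0 < pbar L i ∧ ∑ j, relLiab L i j < 1)
    (P : (Fin n → ℝ) → (Fin n → ℝ))
    (hP : ∀ x : Fin n → ℝ, (∀ i, 0 ≤ x i) → IsGreatestClearingPayment L x (P x))
    (Ω : Type) (mΩ : MeasurableSpace Ω) (ℙ : Measure Ω) (hprob : IsProbabilityMeasure ℙ)
    (X : Ω → Fin n → ℝ) (hXm : Measurable X) (hXpos : ∀ ω i, 0 ≤ X ω i)
    (hXint : ∀ i, Integrable (fun ω => X ω i) ℙ) :
    ∀ i : Fin n,
      (∫ ω, (X ω i + (∑ j, relLiab L j i * P (X ω) j) - pbar L i) ∂ℙ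
        ≤ (∫ ω, X ω i ∂ℙ)
            + (∑ j, relLiab L j i * P (fun k => ∫ ω, X ω k ∂ℙ) j) - pbar L i)
      ∧ (∫ ω, P (X ω) i ∂ℙ ≤ P (fun k => ∫ ω, X ω k ∂ℙ) i) := by
  haveI : Nonempty (Fin n) := Fin.pos_iff_nonempty.mp hn
  set c : ℝ := Finset.univ.sup' Finset.univ_nonempty (fun j => ∑ i, relLiab L j i) with hcdef
  have hc : ∀ j, ∑ i, relLiab L j i ≤ c := by
    intro j
    rw [hcdef]
    exact Finset.le_sup' (fun j => ∑ i, relLiab L j i) (Finset.mem_univ j)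
  have hc1 : c < 1 := by
    rw [hcdef, Finset.sup'_lt_iff]
    exact fun j _ => (hreg j).2
  have h1c : 0 < 1 - c := by linarith
  have hregpos : ∀ i, 0 < pbar L i := fun i => (hreg i).1
  have hPfix : ∀ x : Fin n → ℝ, (∀ i, 0 ≤ x i) →
      ((∀ i, 0 ≤ P x i ∧ P x i ≤ pbar L i) ∧
      ∀ i, P x i = min (pbar L i) (x i + ∑ j, relLiab L j i * P x j)) := fun x hx => (hP x hx).1
  set g : (Fin n → ℝ) → (Fin n → ℝ) := fun v => P (fun i => max (v i) 0) with hgdef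
  have hgX : ∀ ω, g (X ω) = P (X ω) := by
    intro ω
    have h : (fun i => max (X ω i) 0) = X ω := funext fun i => max_eq_left (hXpos ω i)
    simp only [hgdef, h]
  have hglip : LipschitzWith (Real.toNNReal ((n : ℝ) / (1 - c))) g := by
    refine LipschitzWith.of_dist_le_mul fun v w => ?_
    have hKcoe : ((Real.toNNReal ((n : ℝ) / (1 - c)) : NNReal) : ℝ) = (n : ℝ) / (1 - c) :=
      Real.coe_toNNReal _ (div_nonneg (Nat.cast_nonneg n) h1c.le)
    rw [hKcoe]
    have hd0 : 0 ≤ (n : ℝ) / (1 - c) * dist v w :=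
      mul_nonneg (div_nonneg (Nat.cast_nonneg n) h1c.le) dist_nonneg
    rw [dist_pi_le_iff hd0]
    intro i
    rw [Real.dist_eq]
    set v' : Fin n → ℝ := fun i => max (v i) 0 with hv'def
    set w' : Fin n → ℝ := fun i => max (w i) 0 with hw'def
    have hv'0 : ∀ i, 0 ≤ v' i := fun i => le_max_right _ _
    have hw'0 : ∀ i, 0 ≤ w' i := fun i => le_max_right _ _
    have hlip := clearing_lipschitz L hL c hc v' w' (P v') (P w')
      (hPfix v' hv'0) (hPfix w' hw'0)
    have hD : |g v i - g w i| ≤ ∑ k, |P v' k - P w' k| := by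
      have h := Finset.single_le_sum (f := fun k => |P v' k - P w' k|)
        (fun k _ => abs_nonneg _) (Finset.mem_univ i)
      simpa [hgdef, hv'def, hw'def] using h
    have hxy : ∑ k, |v' k - w' k| ≤ (n : ℝ) * dist v w := by
      calc ∑ k, |v' k - w' k| ≤ ∑ _k : Fin n, dist v w := by
            refine Finset.sum_le_sum fun k _ => ?_
            refine (abs_max_sub_max_le_abs _ _ _).trans ?_
            rw [← Real.dist_eq]
            exact dist_le_pi_dist v w k
        _ = (n : ℝ) * dist v w := by
            rw [Finset.sum_const, Finset.card_univ, Fintype.card_fin, nsmul_eq_mul]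
    have hstep : (1 - c) * |g v i - g w i| ≤ (n : ℝ) * dist v w := by
      have h1 := mul_le_mul_of_nonneg_left hD h1c.le
      linarith
    rw [div_mul_eq_mul_div, le_div_iff₀ h1c]
    linarith
  have hPXm : ∀ k : Fin n, Measurable fun ω => P (X ω) k := by
    intro k
    have h1 : Measurable fun ω => g (X ω) := hglip.continuous.measurable.comp hXm
    have h2 : Measurable fun ω => g (X ω) k := (measurable_pi_apply k).comp h1
    have heq : (fun ω => g (X ω) k) = fun ω => P (X ω) k := funext fun ω => by rw [hgX ω]
    rwa [heq] at h2
  have hPXint : ∀ k, Integrable (fun ω => P (X ω) k) ℙ := by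
    intro k
    refine ⟨(hPXm k).aestronglyMeasurable, ?_⟩
    refine HasFiniteIntegral.of_bounded (C := pbar L k) (Filter.Eventually.of_forall fun ω => ?_)
    rw [Real.norm_eq_abs, abs_le]
    have h := (hPfix (X ω) (hXpos ω)).1 k
    exact ⟨by linarith [h.1, (hregpos k).le], h.2⟩
  set E : Fin n → ℝ := fun k => ∫ ω, X ω k ∂ℙ with hEdef
  have hE0 : ∀ k, 0 ≤ E k := fun k => integral_nonneg fun ω => hXpos ω k
  set q : Fin n → ℝ := fun k => ∫ ω, P (X ω) k ∂ℙ with hqdef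
  have hq0 : ∀ k, 0 ≤ q k := fun k => integral_nonneg fun ω => ((hPfix (X ω) (hXpos ω)).1 k).1
  have hqub : ∀ k, q k ≤ pbar L k := by
    intro k
    calc q k ≤ ∫ _ω, pbar L k ∂ℙ :=
          integral_mono (hPXint k) (integrable_const _) fun ω => ((hPfix (X ω) (hXpos ω)).1 k).2
      _ = pbar L k := by simp
  have hsumint : ∀ k, Integrable (fun ω => X ω k + ∑ j, relLiab L j k * P (X ω) j) ℙ :=
    fun k => (hXint k).add (integrable_finset_sum _ fun j _ => (hPXint j).const_mul _)
  have hintsum : ∀ k, (∫ ω, (X ω k + ∑ j, relLiab L j k * P (X ω) j) ∂ℙ)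
      = E k + ∑ j, relLiab L j k * q j := by
    intro k
    rw [integral_add (hXint k) (integrable_finset_sum _ fun j _ => (hPXint j).const_mul _)]
    congr 1
    rw [integral_finset_sum _ fun j _ => (hPXint j).const_mul _]
    exact Finset.sum_congr rfl fun j _ => integral_const_mul _ _
  have hq_post : ∀ k, q k ≤ min (pbar L k) (E k + ∑ j, relLiab L j k * q j) := by
    intro k
    refine le_min (hqub k) ?_
    have h1 : q k ≤ ∫ ω, (X ω k + ∑ j, relLiab L j k * P (X ω) j) ∂ℙ := by
      refine integral_mono (hPXint k) (hsumint k) fun ω => ?_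
      rw [(hPfix (X ω) (hXpos ω)).2 k]
      exact min_le_right _ _
    exact h1.trans_eq (hintsum k)
  have hqle : ∀ k, q k ≤ P E k :=
    postfixed_le_greatest L hL hregpos E (P E) q (hP E hE0) hE0 hq0 hqub hq_post
  intro i
  refine ⟨?_, hqle i⟩
  have hIeq : ∫ ω, (X ω i + (∑ j, relLiab L j i * P (X ω) j) - pbar L i) ∂ℙ
      = E i + (∑ j, relLiab L j i * q j) - pbar L i := by
    rw [integral_sub (hsumint i) (integrable_const _), hintsum i]
    simp
  rw [hIeq]
  have hle : (∑ j, relLiab L j i * q j) ≤ ∑ j, relLiab L j i * P E j :=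
    Finset.sum_le_sum fun j _ => mul_le_mul_of_nonneg_left (hqle j) (relLiab_nonneg' L hL j i)
  have : E i = ∫ ω, X ω i ∂ℙ := rfl
  linarith

end
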